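/- Let q(x) = a_1*x_1^2 + a_2*x_2^2 + a_3*x_3^2 be an integral quadratic form and let p be an odd prime dividing a_1 but not a_2 and not a_3. If -a_2*a_3 is a quadratic residue modulo p, then for every n ≥ 1 the number of solutions (x_1,x_2,x_3) modulo p^n of q(x) ≡ 0 (mod p^n) with p not dividing x_3 is at least (2)*(1 - 1/p)*p^{2n}. -/

import Mathlib

lemma not_prime_dvd_two {p : ℕ} (hp : p.Prime) (hodd : p ≠ 2) : ¬ (p : ℤ) ∣ 2 := by
  intro h
  exact hodd ((Nat.prime_dvd_prime_iff_eq hp Nat.prime_two).mp (by exact_mod_cast h))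

/-- Hensel lifting for square roots over ℤ: a unit square mod `p` lifts to a
square mod `p ^ n` for every `n ≥ 1`, provided `p` is an odd prime. -/
lemma int_sq_lift (p : ℕ) (hp : p.Prime) (hodd : p ≠ 2) (u s : ℤ)
    (hs : (p : ℤ) ∣ s ^ 2 - u) (hu : ¬ (p : ℤ) ∣ u) :
    ∀ n : ℕ, 1 ≤ n → ∃ t : ℤ, (p : ℤ) ^ n ∣ t ^ 2 - u := by
  haveI : Fact p.Prime := ⟨hp⟩
  have hp' : Prime (p : ℤ) := Nat.prime_iff_prime_int.mp hp
  intro n hn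
  induction n with
  | zero => omega
  | succ m ih =>
    rcases Nat.eq_or_lt_of_le hn with h1 | h1
    · exact ⟨s, by simpa [← h1] using hs⟩
    have hm : 1 ≤ m := by omega
    obtain ⟨t, ht⟩ := ih hm
    obtain ⟨k, hk⟩ := ht
    -- `t` is not divisible by `p`
    have hpt : ¬ (p : ℤ) ∣ t := by
      intro hdvd
      apply hu
      have : (p : ℤ) ∣ t ^ 2 := by
        exact dvd_pow hdvd (by norm_num)
      have hdm : (p : ℤ) ∣ (p : ℤ) ^ m * k :=
        Dvd.dvd.mul_right (dvd_pow_self _ (by omega)) k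
      have := this.sub (hk ▸ hdm)
      simpa using this
    have hp2t : ¬ (p : ℤ) ∣ 2 * t := by
      intro hdvd
      rcases hp'.dvd_mul.mp hdvd with h | h
      · exact not_prime_dvd_two hp hodd h
      · exact hpt h
    -- choose c with p ∣ k + 2 * t * c
    have hne : ((2 * t : ℤ) : ZMod p) ≠ 0 := by
      rw [Ne, ZMod.intCast_zmod_eq_zero_iff_dvd]
      exact hp2t
    set c : ℤ := ((((-k : ℤ) : ZMod p) * ((2 * t : ℤ) : ZMod p)⁻¹).val : ℤ) with hc
    have hcc : ((c : ZMod p)) = ((-k : ℤ) : ZMod p) * ((2 * t : ℤ) : ZMod p)⁻¹ := by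
      simp [hc]
    have hdc : (p : ℤ) ∣ k + 2 * t * c := by
      rw [← ZMod.intCast_zmod_eq_zero_iff_dvd]
      rw [Int.cast_add, Int.cast_mul, hcc, Int.cast_neg]
      linear_combination (-(k : ZMod p)) * (mul_inv_cancel₀ hne)
    refine ⟨t + c * (p : ℤ) ^ m, ?_⟩
    have key : (t + c * (p : ℤ) ^ m) ^ 2 - u =
        (p : ℤ) ^ m * (k + 2 * t * c) + c ^ 2 * ((p : ℤ) ^ m) ^ 2 := by
      have : t ^ 2 - u = (p : ℤ) ^ m * k := hk
      ring_nf
      linarith [this]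
    rw [key]
    apply dvd_add
    · rw [pow_succ]
      exact mul_dvd_mul_left _ hdc
    · have : (p : ℤ) ^ (m + 1) ∣ ((p : ℤ) ^ m) ^ 2 := by
        rw [← pow_mul]
        exact pow_dvd_pow _ (by omega)
      exact Dvd.dvd.mul_left this _

/-- Hensel lifting at the level of `ZMod (p ^ n)`. -/
lemma zmod_sq_lift (p : ℕ) (hp : p.Prime) (hodd : p ≠ 2) (n : ℕ) (hn : 1 ≤ n)
    (w : ZMod (p ^ n))
    (hsq : IsSquare ((ZMod.castHom (dvd_pow_self p (by omega : n ≠ 0)) (ZMod p)) w))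
    (hun : IsUnit ((ZMod.castHom (dvd_pow_self p (by omega : n ≠ 0)) (ZMod p)) w)) :
    ∃ t : ZMod (p ^ n), t ^ 2 = w ∧ t ≠ -t := by
  haveI : Fact p.Prime := ⟨hp⟩
  haveI : NeZero (p ^ n) := ⟨pow_ne_zero _ hp.pos.ne'⟩
  set φ := ZMod.castHom (dvd_pow_self p (by omega : n ≠ 0)) (ZMod p) with hφ
  have hval : ((w.val : ℤ) : ZMod p) = φ w := by
    push_cast
    rw [ZMod.natCast_val, ZMod.castHom_apply]
  obtain ⟨s, hs⟩ := hsq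
  have hsdvd : (p : ℤ) ∣ ((s.val : ℤ)) ^ 2 - (w.val : ℤ) := by
    rw [← ZMod.intCast_zmod_eq_zero_iff_dvd]
    push_cast
    rw [ZMod.natCast_val, ZMod.natCast_val, ZMod.cast_id]
    have hw' : (ZMod.cast w : ZMod p) = s * s := by
      rw [← hs, hφ, ZMod.castHom_apply]
    rw [hw']
    ring
  have hudvd : ¬ (p : ℤ) ∣ (w.val : ℤ) := by
    intro h
    have h0 : ((w.val : ℤ) : ZMod p) = 0 := (ZMod.intCast_zmod_eq_zero_iff_dvd _ _).mpr h
    rw [hval] at h0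
    rw [h0] at hun
    simp at hun
  obtain ⟨t, ht⟩ := int_sq_lift p hp hodd (w.val : ℤ) (s.val : ℤ) hsdvd hudvd n hn
  refine ⟨(t : ZMod (p ^ n)), ?_, ?_⟩
  · have : ((t ^ 2 - (w.val : ℤ) : ℤ) : ZMod (p ^ n)) = 0 := by
      rw [ZMod.intCast_zmod_eq_zero_iff_dvd]
      exact_mod_cast ht
    push_cast at this
    rw [ZMod.natCast_val, ZMod.cast_id] at this
    linear_combination this
  · intro h
    have h2t : ((2 * t : ℤ) : ZMod (p ^ n)) = 0 := by
      push_cast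
      linear_combination h
    rw [ZMod.intCast_zmod_eq_zero_iff_dvd] at h2t
    have h2t' : (p : ℤ) ^ n ∣ 2 * t := by exact_mod_cast h2t
    have hpd : (p : ℤ) ∣ 2 * t := dvd_trans (dvd_pow_self (p:ℤ) (by omega : n ≠ 0)) h2t'
    have hp' : Prime (p : ℤ) := Nat.prime_iff_prime_int.mp hp
    rcases hp'.dvd_mul.mp hpd with hc | hc
    · exact not_prime_dvd_two hp hodd hc
    · apply hudvd
      have h1 : (p : ℤ) ∣ t ^ 2 := dvd_pow hc (by norm_num)
      have h2 : (p : ℤ) ∣ t ^ 2 - (w.val : ℤ) :=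
        dvd_trans (dvd_pow_self (p:ℤ) (by omega : n ≠ 0)) ht
      have := h1.sub h2
      simpa using this

theorem stmt_1 (a₁ a₂ a₃ : ℤ) (p : ℕ) (hp : p.Prime) (hodd : p ≠ 2)
    (h1 : (p : ℤ) ∣ a₁) (h2 : ¬ (p : ℤ) ∣ a₂) (h3 : ¬ (p : ℤ) ∣ a₃)
    (hres : IsSquare ((-a₂ * a₃ : ℤ) : ZMod p))
    (n : ℕ) (hn : 1 ≤ n) :
    (2 : ℝ) * (1 - 1 / p) * (p : ℝ) ^ (2 * n) ≤
      Nat.card {x : ZMod (p ^ n) × ZMod (p ^ n) × ZMod (p ^ n) //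
        (a₁ : ZMod (p ^ n)) * x.1 ^ 2 + a₂ * x.2.1 ^ 2 + a₃ * x.2.2 ^ 2 = 0 ∧
          IsUnit x.2.2} := by
  haveI : Fact p.Prime := ⟨hp⟩
  haveI : NeZero (p ^ n) := ⟨pow_ne_zero _ hp.pos.ne'⟩
  set N := p ^ n with hN
  set φ := ZMod.castHom (dvd_pow_self p (by omega : n ≠ 0)) (ZMod p) with hφ
  have hp' : Prime (p : ℤ) := Nat.prime_iff_prime_int.mp hp
  -- a₂ is a unit mod p^n
  have hcop : IsCoprime (a₂ : ℤ) ((p : ℤ) ^ n) :=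
    (((hp'.coprime_iff_not_dvd).mpr h2).symm.pow_right)
  obtain ⟨c, d, hcd⟩ := hcop
  have hpz : ((p : ℕ) : ZMod N) ^ n = 0 := by
    rw [← Nat.cast_pow, ← hN]
    exact ZMod.natCast_self N
  have hA2 : IsUnit ((a₂ : ℤ) : ZMod N) := by
    have hthis := congrArg (fun z : ℤ => (z : ZMod N)) hcd
    push_cast at hthis
    exact isUnit_iff_exists_inv.mpr ⟨(c : ZMod N),
      (by linear_combination hthis - (d : ZMod N) * hpz)⟩
  set A2 : (ZMod N)ˣ := hA2.unit with hA2u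
  have hA2spec : ((a₂ : ℤ) : ZMod N) * ((A2⁻¹ : (ZMod N)ˣ) : ZMod N) = 1 := by
    have h := A2.mul_inv
    rwa [show ((A2 : ZMod N)) = ((a₂ : ℤ) : ZMod N) from hA2.unit_spec] at h
  -- existence of square roots
  have key : ∀ (x₁ : ZMod N) (u : (ZMod N)ˣ),
      ∃ t : ZMod N, t ^ 2 = -((a₁ : ZMod N) * x₁ ^ 2 + a₃ * (u : ZMod N) ^ 2) *
        ((A2⁻¹ : (ZMod N)ˣ) : ZMod N) ∧ t ≠ -t := by
    intro x₁ u
    set w : ZMod N := -((a₁ : ZMod N) * x₁ ^ 2 + a₃ * (u : ZMod N) ^ 2) *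
        ((A2⁻¹ : (ZMod N)ˣ) : ZMod N) with hw
    have ha1p : ((a₁ : ℤ) : ZMod p) = 0 := (ZMod.intCast_zmod_eq_zero_iff_dvd a₁ p).mpr h1
    have hb : ((a₂ : ℤ) : ZMod p) * φ ((A2⁻¹ : (ZMod N)ˣ) : ZMod N) = 1 := by
      have := congrArg φ hA2spec
      simpa using this
    have hφw : φ w = -((a₃ : ZMod p) * (φ (u : ZMod N)) ^ 2) *
        φ ((A2⁻¹ : (ZMod N)ˣ) : ZMod N) := by
      rw [hw]
      simp [ha1p]
    apply zmod_sq_lift p hp hodd n hn w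
    · -- square
      obtain ⟨s, hs⟩ := hres
      push_cast at hs
      refine ⟨s * φ ((A2⁻¹ : (ZMod N)ˣ) : ZMod N) * φ (u : ZMod N), ?_⟩
      rw [hφw]
      set b := φ ((A2⁻¹ : (ZMod N)ˣ) : ZMod N)
      set v := φ (u : ZMod N)
      linear_combination (b^2 * v^2) * hs + ((a₃ : ZMod p) * v^2 * b) * hb
    · -- unit
      rw [hφw]
      have hu3 : IsUnit ((a₃ : ℤ) : ZMod p) := by
        rw [isUnit_iff_ne_zero, Ne, ZMod.intCast_zmod_eq_zero_iff_dvd]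
        exact h3
      have huu : IsUnit (φ (u : ZMod N)) := (Units.map (φ : ZMod N →* ZMod p) u).isUnit
      have hbinv : IsUnit (φ ((A2⁻¹ : (ZMod N)ˣ) : ZMod N)) :=
        (Units.map (φ : ZMod N →* ZMod p) A2⁻¹).isUnit
      exact ((hu3.mul (huu.pow 2)).neg).mul hbinv
  choose T hT1 hT2 using key
  -- build the injection
  set S := {x : ZMod (p ^ n) × ZMod (p ^ n) × ZMod (p ^ n) //
        (a₁ : ZMod (p ^ n)) * x.1 ^ 2 + a₂ * x.2.1 ^ 2 + a₃ * x.2.2 ^ 2 = 0 ∧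
          IsUnit x.2.2} with hS
  have sol : ∀ (x₁ : ZMod N) (u : (ZMod N)ˣ) (b : Bool),
      (a₁ : ZMod N) * x₁ ^ 2 + a₂ * (cond b (T x₁ u) (-(T x₁ u))) ^ 2 +
        a₃ * (u : ZMod N) ^ 2 = 0 := by
    intro x₁ u b
    have h := hT1 x₁ u
    have hsq : (cond b (T x₁ u) (-(T x₁ u))) ^ 2 = (T x₁ u) ^ 2 := by
      cases b <;> simp [neg_pow]
    rw [hsq, h]
    linear_combination (-( (a₁ : ZMod N) * x₁ ^ 2 + a₃ * (u : ZMod N) ^ 2)) * hA2spec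
  set g : ZMod N × (ZMod N)ˣ × Bool → S := fun z =>
    ⟨(z.1, cond z.2.2 (T z.1 z.2.1) (-(T z.1 z.2.1)), (z.2.1 : ZMod N)),
      by exact ⟨sol z.1 z.2.1 z.2.2, z.2.1.isUnit⟩⟩ with hg
  have hginj : Function.Injective g := by
    rintro ⟨x₁, u, b⟩ ⟨y₁, v, c⟩ hgeq
    have e1 : x₁ = y₁ := congrArg (fun r : S => r.1.1) hgeq
    have e2 : cond b (T x₁ u) (-(T x₁ u)) = cond c (T y₁ v) (-(T y₁ v)) :=
      congrArg (fun r : S => r.1.2.1) hgeq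
    have e3 : (u : ZMod N) = (v : ZMod N) := congrArg (fun r : S => r.1.2.2) hgeq
    have huv : u = v := Units.ext e3
    subst huv; subst e1
    cases b <;> cases c <;> simp only [Bool.cond_true, Bool.cond_false, cond_true, cond_false] at e2 ⊢
    · exact (hT2 x₁ u e2.symm).elim
    · exact (hT2 x₁ u e2).elim
  have hcard : Nat.card (ZMod N × (ZMod N)ˣ × Bool) ≤ Nat.card S :=
    Nat.card_le_card_of_injective g hginj
  have hdom : Nat.card (ZMod N × (ZMod N)ˣ × Bool) = N * (N.totient * 2) := by
    simp [Nat.card_prod, Nat.card_eq_fintype_card, ZMod.card, ZMod.card_units_eq_totient]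
  rw [hdom] at hcard
  -- final real computation
  obtain ⟨m, rfl⟩ : ∃ m, n = m + 1 := ⟨n - 1, by omega⟩
  have htot : N.totient = p ^ m * (p - 1) := by
    rw [hN, Nat.totient_prime_pow hp (by omega)]
    norm_num
  have heq : (2 : ℝ) * (1 - 1 / p) * (p : ℝ) ^ (2 * (m + 1)) =
      ((N * (N.totient * 2) : ℕ) : ℝ) := by
    rw [htot, hN]
    have hp0 : (p : ℝ) ≠ 0 := Nat.cast_ne_zero.mpr hp.pos.ne'
    push_cast [Nat.cast_sub hp.one_le]
    field_simp
    ring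
  rw [heq]
  exact_mod_cast hcard
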